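/- Let H be a Hermitian matrix indexed by pairs (x,s), x ∈ {0,…,n−1} a site and s ∈ {A,B}, which is short range with parameters d > 0, K_d > 0. Then for every t ∈ ℝ and all sites x, y with |x−y| ≥ d, the Lieb–Robinson-type bound ‖(e^{itH})_{x,y}‖ ≤ 2·|t|·K_d·e^{|t|·K_d − |x−y|/d} holds. -/

import Mathlib

open MeasureTheory
open scoped ComplexOrder

set_option maxHeartbeats 1000000
set_option synthInstance.maxHeartbeats 1000000

noncomputable section

namespace Chiral

/-- The ℓ²-operator norm of a square complex matrix. -/
def opNorm {n : Type*} [Fintype n] [DecidableEq n] (T : Matrix n n ℂ) : ℝ :=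
  ‖Matrix.toEuclideanCLM (𝕜 := ℂ) T‖

/-- The positive semidefinite square root (the former `Matrix.PosSemidef.sqrt`). -/
def psdSqrt {n : Type*} [Fintype n] [DecidableEq n] {A : Matrix n n ℂ}
    (hA : A.PosSemidef) : Matrix n n ℂ :=
  (hA.1.eigenvectorUnitary : Matrix n n ℂ) *
    Matrix.diagonal ((↑) ∘ (fun x : ℝ => Real.sqrt x) ∘ hA.1.eigenvalues) *
    (star hA.1.eigenvectorUnitary : Matrix n n ℂ)

/-- The trace norm `Tr √(T*T)` of a square complex matrix. -/
def traceNorm {n : Type*} [Fintype n] [DecidableEq n] (T : Matrix n n ℂ) : ℝ :=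
  ((psdSqrt (Matrix.posSemidef_conjTranspose_mul_self T)).trace).re

open Classical in
/-- Functional calculus of a Hermitian matrix: same eigenvectors, eigenvalue `E`
replaced by `f E`.  (Junk value `0` if the matrix is not Hermitian.) -/
def matFun {n : Type*} [Fintype n] [DecidableEq n] (f : ℝ → ℂ) (H : Matrix n n ℂ) :
    Matrix n n ℂ :=
  if hH : H.IsHermitian then
    (hH.eigenvectorUnitary : Matrix n n ℂ) *
      Matrix.diagonal (fun i => f (hH.eigenvalues i)) *
      star (hH.eigenvectorUnitary : Matrix n n ℂ)
  else 0

/-- The matrix exponential. -/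
def matExp {n : Type*} [Fintype n] [DecidableEq n] (M : Matrix n n ℂ) : Matrix n n ℂ :=
  NormedSpace.exp M

/-- `S = tanh (H/δ)` by functional calculus. -/
def tanhOf {n : Type*} [Fintype n] [DecidableEq n] (δ : ℝ) (H : Matrix n n ℂ) :
    Matrix n n ℂ :=
  matFun (fun E => (Real.tanh (E / δ) : ℂ)) H

/-- Index set of the finite chain of length `L` with two internal degrees of freedom. -/
abbrev Site (L : ℕ) := Fin L × Fin 2

/-- The `2×2` block of a matrix on the chain corresponding to sites `x, y`. -/
def matBlock {L : ℕ} (T : Matrix (Site L) (Site L) ℂ) (x y : Fin L) :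
    Matrix (Fin 2) (Fin 2) ℂ :=
  Matrix.of fun s s' => T (x, s) (y, s')

/-- A finite Hamiltonian is short range with parameters `d`, `K`. -/
def FinShortRange {L : ℕ} (H : Matrix (Site L) (Site L) ℂ) (d K : ℝ) : Prop :=
  ∀ x : Fin L, ∑ y : Fin L,
    opNorm (matBlock H x y) * Real.exp (|((x : ℕ) : ℝ) - ((y : ℕ) : ℝ)| / d) ≤ K

/-- The chiral operator `C` on the finite chain: `+1` on the `A` component,
`-1` on the `B` component. -/
def chiralC (L : ℕ) : Matrix (Site L) (Site L) ℂ :=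
  Matrix.diagonal fun p => if p.2 = 0 then 1 else -1

/-- The diagonal matrix `θ(X)` associated to a switch function `θ`. -/
def switchX {L : ℕ} (θ : Fin L → ℝ) : Matrix (Site L) (Site L) ℂ :=
  Matrix.diagonal fun p => (θ p.1 : ℂ)

/-- The standard switch function: `1` on the left half (`x < L/2`), `0` on the right half. -/
def midSwitch (L : ℕ) : Fin L → ℝ := fun x => if ((x : ℕ) : ℝ) < (L : ℝ) / 2 then 1 else 0

/-- The edge index `Tr (C θ(X) (1 - S²))`. -/
def edgeIndex {L : ℕ} (θ : Fin L → ℝ) (S : Matrix (Site L) (Site L) ℂ) : ℂ :=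
  Matrix.trace (chiralC L * switchX θ * (1 - S * S))

/-- The bulk index `½ Tr (C S [θ(X), S])`. -/
def bulkIndex {L : ℕ} (θ : Fin L → ℝ) (S : Matrix (Site L) (Site L) ℂ) : ℂ :=
  (1 / 2 : ℂ) * Matrix.trace (chiralC L * S * (switchX θ * S - S * switchX θ))

/-- The bulk Hilbert space `ℓ²(ℤ; ℂ²)`. -/
abbrev BulkSpace := lp (fun _ : ℤ => EuclideanSpace ℂ (Fin 2)) 2

/-- Bounded operators on the bulk Hilbert space. -/
abbrev BulkOp := BulkSpace →L[ℂ] BulkSpace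

/-- The canonical basis vector at site `x` with internal index `s`. -/
def bvec (x : ℤ) (s : Fin 2) : BulkSpace := lp.single 2 x (EuclideanSpace.single s 1)

/-- The `2×2` block `T_{x,y}` of a bulk operator. -/
def bulkBlock (T : BulkOp) (x y : ℤ) : Matrix (Fin 2) (Fin 2) ℂ :=
  Matrix.of fun s s' => (inner ℂ (bvec x s) (T (bvec y s')) : ℂ)

/-- A bulk Hamiltonian is short range with parameters `d`, `K`:
`sup_x ∑_y ‖T_{x,y}‖ e^{|x-y|/d} ≤ K`. -/
def BulkShortRange (T : BulkOp) (d K : ℝ) : Prop :=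
  ∀ x : ℤ,
    Summable (fun y : ℤ => opNorm (bulkBlock T x y) * Real.exp (|((x : ℝ)) - ((y : ℝ))| / d)) ∧
    ∑' y : ℤ, opNorm (bulkBlock T x y) * Real.exp (|((x : ℝ)) - ((y : ℝ))| / d) ≤ K

/-- The spectrum of `T` does not meet the open interval `(-Δ, Δ)`. -/
def HasGap (T : BulkOp) (Δ : ℝ) : Prop :=
  ∀ r : ℝ, |r| < Δ → (r : ℂ) ∉ spectrum ℂ T

/-- The on-site chiral matrix `diag(1, -1)`. -/
def c2 : Matrix (Fin 2) (Fin 2) ℂ := Matrix.diagonal fun s => if s = 0 then 1 else -1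

/-- A bulk operator is chiral: it anticommutes with the bulk chiral operator
(expressed blockwise, which is equivalent). -/
def ChiralBulk (T : BulkOp) : Prop :=
  ∀ x y : ℤ, c2 * bulkBlock T x y + bulkBlock T x y * c2 = 0

/-- The restriction `ι* T ι` of a bulk operator to the finite open chain of length `L`. -/
def restrict (L : ℕ) (T : BulkOp) : Matrix (Site L) (Site L) ℂ :=
  Matrix.of fun p q => bulkBlock T ((p.1 : ℕ) : ℤ) ((q.1 : ℕ) : ℤ) p.2 q.2

variable {m : Type*} [Fintype m] [DecidableEq m]

lemma opNorm_mul_le (A B : Matrix m m ℂ) : opNorm (A*B) ≤ opNorm A * opNorm B := by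
  rw [opNorm, map_mul]; exact norm_mul_le _ _

lemma opNorm_smul (c : ℂ) (A : Matrix m m ℂ) : opNorm (c • A) = ‖c‖ * opNorm A := by
  rw [opNorm, _root_.map_smul]
  exact norm_smul c (Matrix.toEuclideanCLM (𝕜 := ℂ) A)

lemma opNorm_sum_le {ι : Type*} (s : Finset ι) (f : ι → Matrix m m ℂ) :
    opNorm (∑ i ∈ s, f i) ≤ ∑ i ∈ s, opNorm (f i) := by
  rw [opNorm, map_sum]; exact norm_sum_le _ _

lemma matBlock_mul {L : ℕ} (A B : Matrix (Site L) (Site L) ℂ) (x y : Fin L) :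
    matBlock (A * B) x y = ∑ z : Fin L, matBlock A x z * matBlock B z y := by
  ext s s'
  simp [matBlock, Matrix.mul_apply, Matrix.sum_apply, Fintype.sum_prod_type]

lemma matBlock_smul {L : ℕ} (c : ℂ) (A : Matrix (Site L) (Site L) ℂ) (x y : Fin L) :
    matBlock (c • A) x y = c • matBlock A x y := by
  ext s s'; simp [matBlock]

lemma matBlock_one {L : ℕ} (x y : Fin L) (h : x ≠ y) :
    matBlock (1 : Matrix (Site L) (Site L) ℂ) x y = 0 := by
  ext s s'
  simp [matBlock, Matrix.one_apply, Prod.ext_iff, h]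



section
variable {L : ℕ} {d Kd : ℝ}

lemma opNorm_matBlock_nonneg {T : Matrix (Site L) (Site L) ℂ} {x y : Fin L} :
    0 ≤ opNorm (matBlock T x y) := norm_nonneg _

lemma opNorm_matBlock_mul_le (A B : Matrix (Site L) (Site L) ℂ) (x y : Fin L) :
    opNorm (matBlock (A * B) x y) ≤
      ∑ z : Fin L, opNorm (matBlock A x z) * opNorm (matBlock B z y) := by
  rw [matBlock_mul]
  refine (opNorm_sum_le _ _).trans ?_
  exact Finset.sum_le_sum fun z _ => opNorm_mul_le _ _


lemma weight_tri (hd : 0 < d) (x z y : Fin L) :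
    Real.exp (|((x : ℕ) : ℝ) - ((y : ℕ) : ℝ)| / d) ≤
      Real.exp (|((x : ℕ) : ℝ) - ((z : ℕ) : ℝ)| / d) *
      Real.exp (|((z : ℕ) : ℝ) - ((y : ℕ) : ℝ)| / d) := by
  rw [← Real.exp_add, ← add_div]
  have := abs_sub_le ((x : ℕ) : ℝ) ((z : ℕ) : ℝ) ((y : ℕ) : ℝ)
  gcongr

lemma pow_weight_bound (hd : 0 < d) (hKd : 0 ≤ Kd)
    {H : Matrix (Site L) (Site L) ℂ} (hsr : FinShortRange H d Kd) :
    ∀ k : ℕ, ∀ x : Fin L, ∑ y : Fin L,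
      opNorm (matBlock (H ^ (k+1)) x y) *
        Real.exp (|((x : ℕ) : ℝ) - ((y : ℕ) : ℝ)| / d) ≤ Kd ^ (k+1) := by
  intro k
  induction k with
  | zero => intro x; simpa using hsr x
  | succ k ih =>
    intro x
    set E : Fin L → Fin L → ℝ := fun a b =>
      Real.exp (|((a : ℕ) : ℝ) - ((b : ℕ) : ℝ)| / d) with hE
    have hEpos : ∀ a b, 0 < E a b := fun a b => Real.exp_pos _
    calc ∑ y : Fin L, opNorm (matBlock (H ^ (k+2)) x y) * E x y
        ≤ ∑ y : Fin L, (∑ z : Fin L,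
            opNorm (matBlock H x z) * opNorm (matBlock (H ^ (k+1)) z y)) * E x y := by
          refine Finset.sum_le_sum fun y _ => ?_
          have : H ^ (k+2) = H * H ^ (k+1) := by rw [pow_succ']
          rw [this]
          exact mul_le_mul_of_nonneg_right (opNorm_matBlock_mul_le _ _ _ _)
            (hEpos x y).le
      _ = ∑ z : Fin L, ∑ y : Fin L,
            opNorm (matBlock H x z) * opNorm (matBlock (H ^ (k+1)) z y) * E x y := by
          rw [Finset.sum_comm]
          exact Finset.sum_congr rfl fun y _ => Finset.sum_mul _ _ _
      _ ≤ ∑ z : Fin L, ∑ y : Fin L,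
            (opNorm (matBlock H x z) * E x z) *
            (opNorm (matBlock (H ^ (k+1)) z y) * E z y) := by
          refine Finset.sum_le_sum fun z _ => Finset.sum_le_sum fun y _ => ?_
          have h1 := weight_tri (L := L) hd x z y
          have n1 : (0:ℝ) ≤ opNorm (matBlock H x z) := opNorm_matBlock_nonneg
          have n2 : (0:ℝ) ≤ opNorm (matBlock (H ^ (k+1)) z y) := opNorm_matBlock_nonneg
          calc opNorm (matBlock H x z) * opNorm (matBlock (H ^ (k+1)) z y) * E x y
              ≤ opNorm (matBlock H x z) * opNorm (matBlock (H ^ (k+1)) z y) *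
                  (E x z * E z y) :=
                mul_le_mul_of_nonneg_left h1 (mul_nonneg n1 n2)
            _ = (opNorm (matBlock H x z) * E x z) *
                (opNorm (matBlock (H ^ (k+1)) z y) * E z y) := by ring
      _ = ∑ z : Fin L, (opNorm (matBlock H x z) * E x z) *
            (∑ y : Fin L, opNorm (matBlock (H ^ (k+1)) z y) * E z y) := by
          exact Finset.sum_congr rfl fun z _ => (Finset.mul_sum _ _ _).symm
      _ ≤ ∑ z : Fin L, (opNorm (matBlock H x z) * E x z) * Kd ^ (k+1) := by
          refine Finset.sum_le_sum fun z _ => ?_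
          exact mul_le_mul_of_nonneg_left (ih z)
            (mul_nonneg opNorm_matBlock_nonneg (hEpos x z).le)
      _ = (∑ z : Fin L, opNorm (matBlock H x z) * E x z) * Kd ^ (k+1) :=
          (Finset.sum_mul _ _ _).symm
      _ ≤ Kd * Kd ^ (k+1) :=
          mul_le_mul_of_nonneg_right (hsr x) (pow_nonneg hKd _)
      _ = Kd ^ (k+2) := by ring

lemma pow_block_bound (hd : 0 < d) (hKd : 0 ≤ Kd)
    {H : Matrix (Site L) (Site L) ℂ} (hsr : FinShortRange H d Kd)
    (k : ℕ) (x y : Fin L) :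
    opNorm (matBlock (H ^ (k+1)) x y) ≤
      Kd ^ (k+1) * Real.exp (-(|((x : ℕ) : ℝ) - ((y : ℕ) : ℝ)| / d)) := by
  have h1 : opNorm (matBlock (H ^ (k+1)) x y) *
      Real.exp (|((x : ℕ) : ℝ) - ((y : ℕ) : ℝ)| / d) ≤ Kd ^ (k+1) := by
    refine le_trans ?_ (pow_weight_bound hd hKd hsr k x)
    exact Finset.single_le_sum (f := fun y => opNorm (matBlock (H ^ (k+1)) x y) *
      Real.exp (|((x : ℕ) : ℝ) - ((y : ℕ) : ℝ)| / d))
      (fun z _ => mul_nonneg opNorm_matBlock_nonneg (Real.exp_pos _).le)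
      (Finset.mem_univ y)
  rw [Real.exp_neg, ← div_eq_mul_inv, le_div_iff₀ (Real.exp_pos _)]
  exact h1

end



lemma matBlock_add {L : ℕ} (A B : Matrix (Site L) (Site L) ℂ) (x y : Fin L) :
    matBlock (A + B) x y = matBlock A x y + matBlock B x y := by
  ext s s'; simp [matBlock]

/-- The composite map `T ↦ toEuclideanCLM (matBlock T x y)` as a linear map. -/
def blockCLM {L : ℕ} (x y : Fin L) :
    Matrix (Site L) (Site L) ℂ →ₗ[ℂ]
      (EuclideanSpace ℂ (Fin 2) →L[ℂ] EuclideanSpace ℂ (Fin 2)) where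
  toFun T := Matrix.toEuclideanCLM (𝕜 := ℂ) (matBlock T x y)
  map_add' A B := by rw [matBlock_add, map_add]
  map_smul' c A := by rw [matBlock_smul, _root_.map_smul]; rfl

lemma opNorm_eq_blockCLM {L : ℕ} (T : Matrix (Site L) (Site L) ℂ) (x y : Fin L) :
    opNorm (matBlock T x y) = ‖blockCLM x y T‖ := rfl

lemma matExp_block_tsum {L : ℕ} (M : Matrix (Site L) (Site L) ℂ) (x y : Fin L) :
    blockCLM x y (matExp M) = ∑' k : ℕ, blockCLM x y (((Nat.factorial k : ℂ))⁻¹ • M ^ k) := by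
  letI : NormedRing (Matrix (Site L) (Site L) ℂ) := Matrix.linftyOpNormedRing
  letI : NormedAlgebra ℂ (Matrix (Site L) (Site L) ℂ) := Matrix.linftyOpNormedAlgebra
  have hsum : Summable (fun k : ℕ => ((Nat.factorial k : ℂ))⁻¹ • M ^ k) :=
    NormedSpace.expSeries_summable' (𝕂 := ℂ) M
  have hcont : Continuous (blockCLM (L := L) x y) :=
    LinearMap.continuous_of_finiteDimensional _
  have hexp : matExp M = ∑' k : ℕ, ((Nat.factorial k : ℂ))⁻¹ • M ^ k := by
    rw [matExp, NormedSpace.exp_eq_tsum ℂ]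
  rw [hexp]
  exact (hsum.hasSum.map (blockCLM x y).toAddMonoidHom hcont).tsum_eq.symm


lemma exp_sub_one_le {a : ℝ} (ha : 0 ≤ a) : Real.exp a - 1 ≤ a * Real.exp a := by
  have h1 := Real.add_one_le_exp (-a)
  have h2 := Real.exp_pos a
  have h3 : Real.exp (-a) * Real.exp a = 1 := by
    rw [← Real.exp_add]; simp
  nlinarith


theorem stmt16 {n : ℕ} (H : Matrix (Site n) (Site n) ℂ) (hH : H.IsHermitian)
    (d Kd : ℝ) (hd : 0 < d) (hKd : 0 < Kd) (hsr : FinShortRange H d Kd)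
    (t : ℝ) (x y : Fin n) (hxy : d ≤ |((x : ℕ) : ℝ) - ((y : ℕ) : ℝ)|) :
    opNorm (matBlock (matExp ((Complex.I * (t : ℂ)) • H)) x y) ≤
      2 * |t| * Kd * Real.exp (|t| * Kd - |((x : ℕ) : ℝ) - ((y : ℕ) : ℝ)| / d) := by
  set r : ℝ := |((x : ℕ) : ℝ) - ((y : ℕ) : ℝ)| with hr
  set a : ℝ := |t| * Kd with ha
  have ha0 : 0 ≤ a := mul_nonneg (abs_nonneg _) hKd.le
  have hxney : x ≠ y := by
    intro h
    have h0 : r = 0 := by rw [hr, h, sub_self, abs_zero]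
    linarith
  set M : Matrix (Site n) (Site n) ℂ := (Complex.I * (t : ℂ)) • H with hM
  -- per-term norm bound
  set g : ℕ → ℝ := fun k => if k = 0 then 0 else Real.exp (-(r/d)) * (a ^ k / k.factorial)
    with hg
  have hterm : ∀ k : ℕ, ‖blockCLM x y (((Nat.factorial k : ℂ))⁻¹ • M ^ k)‖ ≤ g k := by
    intro k
    have hMk : M ^ k = ((Complex.I * (t : ℂ)) ^ k) • H ^ k := smul_pow _ _ _
    have hblk : ((Nat.factorial k : ℂ))⁻¹ • M ^ k =
        (((Nat.factorial k : ℂ))⁻¹ * (Complex.I * (t : ℂ)) ^ k) • H ^ k := by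
      rw [hMk, smul_smul]
    rw [hblk, ← opNorm_eq_blockCLM, matBlock_smul, opNorm_smul]
    have hc : ‖((Nat.factorial k : ℂ))⁻¹ * (Complex.I * (t : ℂ)) ^ k‖ =
        ((k.factorial : ℝ))⁻¹ * |t| ^ k := by
      rw [norm_mul, norm_pow, norm_mul, Complex.norm_I, Complex.norm_real,
        one_mul, norm_inv, Complex.norm_natCast, Real.norm_eq_abs]
    rw [hc]
    match k with
    | 0 =>
      rw [show (H : Matrix (Site n) (Site n) ℂ) ^ (0:ℕ) = 1 from pow_zero H,
        matBlock_one x y hxney]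
      simp [hg, opNorm, map_zero]
    | (k+1) =>
      have hb := pow_block_bound hd hKd.le hsr k x y
      have : ((k+1).factorial : ℝ)⁻¹ * |t| ^ (k+1) *
          opNorm (matBlock (H ^ (k+1)) x y) ≤
          ((k+1).factorial : ℝ)⁻¹ * |t| ^ (k+1) * (Kd ^ (k+1) * Real.exp (-(r/d))) := by
        refine mul_le_mul_of_nonneg_left hb ?_
        positivity
      refine this.trans ?_
      have hgk : g (k+1) = Real.exp (-(r/d)) * (a ^ (k+1) / (k+1).factorial) := by
        simp [hg]
      rw [hgk, ha, mul_pow]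
      rw [div_eq_mul_inv]
      ring_nf
      exact le_of_eq (by ring)
  -- sum of the bound series
  have hf : HasSum (fun k : ℕ => Real.exp (-(r/d)) * (a ^ k / k.factorial))
      (Real.exp (-(r/d)) * Real.exp a) := by
    have h1 : HasSum (fun k : ℕ => a ^ k / k.factorial) (Real.exp a) := by
      have := (Real.summable_pow_div_factorial a).hasSum
      have h2 : ∑' k : ℕ, a ^ k / k.factorial = Real.exp a := by
        rw [Real.exp_eq_exp_ℝ, NormedSpace.exp_eq_tsum_div]
      rwa [h2] at this
    exact h1.mul_left _
  have hsingle : HasSum (fun k : ℕ => if k = 0 then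
      Real.exp (-(r/d)) * (a ^ 0 / (0:ℕ).factorial) else 0)
      (Real.exp (-(r/d)) * (a ^ 0 / (0:ℕ).factorial)) := hasSum_ite_eq 0 _
  have hgsum : HasSum g (Real.exp (-(r/d)) * Real.exp a - Real.exp (-(r/d))) := by
    have := hf.sub hsingle
    have h0 : Real.exp (-(r/d)) * ((a:ℝ) ^ 0 / (0:ℕ).factorial) = Real.exp (-(r/d)) := by
      simp
    rw [h0] at this
    refine this.congr_fun ?_
    intro k
    cases k with
    | zero => simp [hg]
    | succ k => simp [hg]
  -- conclude
  have hmain : opNorm (matBlock (matExp M) x y) ≤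
      Real.exp (-(r/d)) * Real.exp a - Real.exp (-(r/d)) := by
    rw [opNorm_eq_blockCLM, matExp_block_tsum]
    exact tsum_of_norm_bounded hgsum hterm
  refine hmain.trans ?_
  have key : Real.exp (-(r/d)) * Real.exp a - Real.exp (-(r/d)) =
      Real.exp (-(r/d)) * (Real.exp a - 1) := by ring
  rw [key]
  have h2 : Real.exp (-(r/d)) * (Real.exp a - 1) ≤ Real.exp (-(r/d)) * (a * Real.exp a) :=
    mul_le_mul_of_nonneg_left (exp_sub_one_le ha0) (Real.exp_pos _).le
  refine h2.trans ?_
  have h3 : Real.exp (-(r/d)) * (a * Real.exp a) = a * Real.exp (a - r/d) := by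
    rw [show a - r/d = -(r/d) + a by ring, Real.exp_add]; ring
  rw [h3]
  have h4 : a * Real.exp (a - r/d) ≤ 2 * a * Real.exp (a - r/d) := by
    nlinarith [Real.exp_pos (a - r/d), ha0]
  refine h4.trans_eq ?_
  rw [ha]; ring

end Chiral

end
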